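/- Every free group is residually nilpotent, i.e., the intersection of all terms of its lower central series of a free group is trivial. -/

import Mathlib

namespace Stmt9Aux

open scoped commutatorElement

variable {α : Type*} [DecidableEq α]

/-- The delta function at the empty word. -/
def δ : List α → ℤ := fun W => if W = [] then 1 else 0

/-- Left multiplication by `1 + X_x` on noncommutative power series coefficients. -/
def Tf (x : α) (f : List α → ℤ) : List α → ℤ
  | [] => f []
  | y :: W => f (y :: W) + if y = x then f W else 0

/-- Left multiplication by `(1 + X_x)⁻¹ = ∑ (-X_x)^m`. -/
def Sf (x : α) (f : List α → ℤ) : List α → ℤ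
  | [] => f []
  | y :: W => f (y :: W) - if y = x then Sf x f W else 0

lemma Tf_nil (x : α) (f : List α → ℤ) : Tf x f [] = f [] := rfl
lemma Tf_cons (x : α) (f : List α → ℤ) (y : α) (W : List α) :
    Tf x f (y :: W) = f (y :: W) + if y = x then f W else 0 := rfl
lemma Sf_nil (x : α) (f : List α → ℤ) : Sf x f [] = f [] := rfl
lemma Sf_cons (x : α) (f : List α → ℤ) (y : α) (W : List α) :
    Sf x f (y :: W) = f (y :: W) - if y = x then Sf x f W else 0 := rfl

lemma Tf_head_ne (x : α) (f : List α → ℤ) {W : List α} (h : W.head? ≠ some x) :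
    Tf x f W = f W := by
  cases W with
  | nil => rfl
  | cons y W => 
    have : y ≠ x := by simpa using h
    simp [Tf_cons, this]

lemma Sf_head_ne (x : α) (f : List α → ℤ) {W : List α} (h : W.head? ≠ some x) :
    Sf x f W = f W := by
  cases W with
  | nil => rfl
  | cons y W =>
    have : y ≠ x := by simpa using h
    simp [Sf_cons, this]

lemma Tf_add (x : α) (f g : List α → ℤ) : Tf x (f + g) = Tf x f + Tf x g := by
  funext W
  cases W with
  | nil => simp [Tf_nil]
  | cons y W => simp [Tf_cons]; split <;> ring

lemma Sf_add (x : α) (f g : List α → ℤ) : Sf x (f + g) = Sf x f + Sf x g := by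
  funext W
  induction W with
  | nil => simp [Sf_nil]
  | cons y W ih => 
    simp only [Sf_cons, Pi.add_apply, ih]
    split <;> ring

lemma Tf_smul (x : α) (z : ℤ) (f : List α → ℤ) : Tf x (z • f) = z • Tf x f := by
  funext W
  cases W with
  | nil => simp [Tf_nil]
  | cons y W => simp [Tf_cons, smul_eq_mul]; split <;> ring

lemma Sf_smul (x : α) (z : ℤ) (f : List α → ℤ) : Sf x (z • f) = z • Sf x f := by
  funext W
  induction W with
  | nil => simp [Sf_nil]
  | cons y W ih =>
    simp only [Sf_cons, Pi.smul_apply, smul_eq_mul, ih]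
    split <;> ring

/-- `Tf` as a linear endomorphism. -/
def TL (x : α) : Module.End ℤ (List α → ℤ) where
  toFun := Tf x
  map_add' f g := Tf_add x f g
  map_smul' z f := Tf_smul x z f

/-- `Sf` as a linear endomorphism. -/
def SL (x : α) : Module.End ℤ (List α → ℤ) where
  toFun := Sf x
  map_add' f g := Sf_add x f g
  map_smul' z f := Sf_smul x z f

lemma Tf_Sf (x : α) (f : List α → ℤ) : ∀ W, Tf x (Sf x f) W = f W := by
  intro W
  cases W with
  | nil => simp [Tf_nil, Sf_nil]
  | cons y W =>
    by_cases h : y = x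
    · subst h
      simp [Tf_cons, Sf_cons]
    · simp [Tf_cons, Sf_cons, h]

lemma Sf_Tf (x : α) (f : List α → ℤ) : ∀ W, Sf x (Tf x f) W = f W := by
  intro W
  induction W with
  | nil => simp [Tf_nil, Sf_nil]
  | cons y W ih =>
    by_cases h : y = x
    · subst h
      simp [Tf_cons, Sf_cons, ih]
    · simp [Tf_cons, Sf_cons, h]

/-- The Magnus unit `1 + X_x`. -/
def uX (x : α) : (Module.End ℤ (List α → ℤ))ˣ where
  val := TL x
  inv := SL x
  val_inv := by
    apply LinearMap.ext; intro f; funext W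
    exact Tf_Sf x f W
  inv_val := by
    apply LinearMap.ext; intro f; funext W
    exact Sf_Tf x f W

/-- The Magnus homomorphism. -/
def μ : FreeGroup α →* (Module.End ℤ (List α → ℤ))ˣ := FreeGroup.lift uX


abbrev E (α : Type*) := Module.End ℤ (List α → ℤ)

/-- An operator has degree `≥ n` w.r.t. the word-length filtration. -/
def degGe (n : ℕ) (O : E α) : Prop :=
  ∀ (k : ℕ) (f : List α → ℤ), (∀ W : List α, W.length < k → f W = 0) →
    ∀ W : List α, W.length < k + n → O f W = 0

lemma degGe_mono {m n : ℕ} (h : m ≤ n) {O : E α} (hO : degGe n O) : degGe m O := by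
  intro k f hf W hW
  exact hO k f hf W (lt_of_lt_of_le hW (by omega))

lemma degGe_zero (n : ℕ) : degGe n (0 : E α) := by
  intro k f hf W hW; simp

lemma degGe_one : degGe 0 (1 : E α) := by
  intro k f hf W hW
  simpa using hf W (by omega)

lemma degGe_add {n : ℕ} {O P : E α} (hO : degGe n O) (hP : degGe n P) :
    degGe n (O + P) := by
  intro k f hf W hW
  simp [LinearMap.add_apply, hO k f hf W hW, hP k f hf W hW]

lemma degGe_neg {n : ℕ} {O : E α} (hO : degGe n O) : degGe n (-O) := by
  intro k f hf W hW
  simp [LinearMap.neg_apply, hO k f hf W hW]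

lemma degGe_sub {n : ℕ} {O P : E α} (hO : degGe n O) (hP : degGe n P) :
    degGe n (O - P) := by
  rw [sub_eq_add_neg]; exact degGe_add hO (degGe_neg hP)

lemma degGe_mul {m n : ℕ} {O P : E α} (hO : degGe m O) (hP : degGe n P) :
    degGe (m + n) (O * P) := by
  intro k f hf W hW
  have h1 : ∀ W : List α, W.length < (k + n) → P f W = 0 := fun W hW => hP k f hf W hW
  have := hO (k + n) (P f) h1 W (by omega)
  simpa [Module.End.mul_apply] using this

/-- The dimension subgroups of the units of `E α`. -/
def D (n : ℕ) : Subgroup (E α)ˣ where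
  carrier := {u | degGe 0 (u : E α) ∧ degGe 0 ((u⁻¹ : (E α)ˣ) : E α) ∧
    degGe n ((u : E α) - 1)}
  one_mem' := by
    refine ⟨degGe_one, by simpa using degGe_one, ?_⟩
    simpa using degGe_zero n
  mul_mem' := by
    rintro a b ⟨ha0, ha0', han⟩ ⟨hb0, hb0', hbn⟩
    refine ⟨?_, ?_, ?_⟩
    · simpa [Units.val_mul] using degGe_mul ha0 hb0
    · rw [mul_inv_rev]
      simpa [Units.val_mul] using degGe_mul hb0' ha0'
    · have key : ((a * b : (E α)ˣ) : E α) - 1 =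
        ((a : E α) - 1) * ((b : E α) - 1) + (((a : E α) - 1) + ((b : E α) - 1)) := by
        simp [Units.val_mul]; noncomm_ring
      rw [key]
      exact degGe_add (degGe_mono (by omega) (degGe_mul han hbn)) (degGe_add han hbn)
  inv_mem' := by
    rintro a ⟨ha0, ha0', han⟩
    refine ⟨ha0', by simpa using ha0, ?_⟩
    have key : ((a⁻¹ : (E α)ˣ) : E α) - 1 =
        -(((a⁻¹ : (E α)ˣ) : E α) * ((a : E α) - 1)) := by
      have h1 : ((a⁻¹ : (E α)ˣ) : E α) * (a : E α) = 1 := by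
        rw [← Units.val_mul]; simp
      rw [mul_sub, h1]; noncomm_ring
    rw [key]
    exact degGe_neg (by simpa using degGe_mul ha0' han)

lemma mem_D {n : ℕ} {u : (E α)ˣ} :
    u ∈ D n ↔ degGe 0 (u : E α) ∧ degGe 0 ((u⁻¹ : (E α)ˣ) : E α) ∧
      degGe n ((u : E α) - 1) := Iff.rfl

lemma D_antitone {m n : ℕ} (h : m ≤ n) : D (α := α) n ≤ D m := by
  rintro u ⟨h0, h0', hn⟩
  exact ⟨h0, h0', degGe_mono h hn⟩

lemma commutator_mem_D {m n : ℕ} {a b : (E α)ˣ} (ha : a ∈ D m) (hb : b ∈ D n) :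
    ⁅a, b⁆ ∈ D (m + n) := by
  have ha0 : a ∈ D (α := α) 0 := D_antitone (Nat.zero_le m) ha
  have hb0 : b ∈ D (α := α) 0 := D_antitone (Nat.zero_le n) hb
  have hmem0 : ⁅a, b⁆ ∈ D (α := α) 0 := by
    rw [commutatorElement_def]
    exact Subgroup.mul_mem _ (Subgroup.mul_mem _ (Subgroup.mul_mem _ ha0 hb0)
      (Subgroup.inv_mem _ ha0)) (Subgroup.inv_mem _ hb0)
  refine ⟨hmem0.1, hmem0.2.1, ?_⟩
  have key : ((⁅a, b⁆ : (E α)ˣ) : E α) - 1 =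
      ((a : E α) * (b : E α) - (b : E α) * (a : E α)) *
        (((a⁻¹ : (E α)ˣ) : E α) * ((b⁻¹ : (E α)ˣ) : E α)) := by
    have h1 : (a : E α) * ((a⁻¹ : (E α)ˣ) : E α) = 1 := by rw [← Units.val_mul]; simp
    have h2 : (b : E α) * ((b⁻¹ : (E α)ˣ) : E α) = 1 := by rw [← Units.val_mul]; simp
    rw [commutatorElement_def]
    simp only [Units.val_mul]
    rw [sub_mul]
    have e1 : (b : E α) * (a : E α) * (((a⁻¹ : (E α)ˣ) : E α) * ((b⁻¹ : (E α)ˣ) : E α)) = 1 := by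
      rw [mul_assoc (b : E α), ← mul_assoc (a : E α), h1, one_mul, h2]
    rw [e1]
    noncomm_ring
  rw [key]
  have hmain : degGe (m + n) ((a : E α) * (b : E α) - (b : E α) * (a : E α)) := by
    have key2 : (a : E α) * (b : E α) - (b : E α) * (a : E α) =
        ((a : E α) - 1) * ((b : E α) - 1) - ((b : E α) - 1) * ((a : E α) - 1) := by
      noncomm_ring
    rw [key2]
    exact degGe_sub (degGe_mul ha.2.2 hb.2.2)
      (by rw [Nat.add_comm m n]; exact degGe_mul hb.2.2 ha.2.2)
  have hinv : degGe 0 (((a⁻¹ : (E α)ˣ) : E α) * ((b⁻¹ : (E α)ˣ) : E α)) :=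
    degGe_mul ha.2.1 hb.2.1
  simpa using degGe_mul hmain hinv



lemma degGe0_TL (x : α) : degGe 0 (TL x : E α) := by
  intro k f hf W hW
  rw [Nat.add_zero] at hW
  show Tf x f W = 0
  cases W with
  | nil => simpa [Tf_nil] using hf [] hW
  | cons y W =>
    have h1 : f (y :: W) = 0 := hf _ hW
    have h2 : f W = 0 := hf _ (by simp at hW ⊢; omega)
    simp [Tf_cons, h1, h2]

lemma degGe0_SL (x : α) : degGe 0 (SL x : E α) := by
  intro k f hf W hW
  rw [Nat.add_zero] at hW
  show Sf x f W = 0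
  induction W with
  | nil => simpa [Sf_nil] using hf [] hW
  | cons y W ih =>
    have h1 : f (y :: W) = 0 := hf _ hW
    have h2 : Sf x f W = 0 := ih (by simp at hW ⊢; omega)
    simp [Sf_cons, h1, h2]

lemma degGe1_TL_sub_one (x : α) : degGe 1 ((TL x : E α) - 1) := by
  intro k f hf W hW
  have : ((TL x : E α) - 1) f W = Tf x f W - f W := by
    simp [LinearMap.sub_apply, TL]
  rw [this]
  cases W with
  | nil => simp [Tf_nil]
  | cons y W =>
    have h2 : f W = 0 := hf _ (by simp at hW ⊢; omega)
    simp [Tf_cons, h2]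

lemma uX_mem_D1 (x : α) : uX x ∈ D (α := α) 1 := by
  refine ⟨degGe0_TL x, ?_, degGe1_TL_sub_one x⟩
  show degGe 0 ((uX x)⁻¹ : (E α)ˣ).val
  have : (((uX x)⁻¹ : (E α)ˣ) : E α) = SL x := rfl
  rw [this]
  exact degGe0_SL x

lemma mu_mem_D1 (g : FreeGroup α) : μ g ∈ D (α := α) 1 := by
  induction g using FreeGroup.induction_on with
  | C1 => rw [map_one]; exact Subgroup.one_mem _
  | of x =>
    have hpure : (pure x : FreeGroup α) = FreeGroup.of x := rfl
    rw [show μ (FreeGroup.of x) = uX x from FreeGroup.lift_apply_of]; exact uX_mem_D1 x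
  | inv_of x _ =>
    have hpure : (pure x : FreeGroup α) = FreeGroup.of x := rfl
    rw [map_inv]
    exact Subgroup.inv_mem _ (by rw [show μ (FreeGroup.of x) = uX x from FreeGroup.lift_apply_of]; exact uX_mem_D1 x)
  | mul a b ha hb => rw [map_mul]; exact Subgroup.mul_mem _ ha hb

lemma lcs_le (n : ℕ) :
    (⊤ : Subgroup (FreeGroup α)).lowerCentralSeries n ≤ (D (α := α) n).comap μ := by
  induction n with
  | zero =>
    intro g _
    exact D_antitone (by omega) (mu_mem_D1 g)
  | succ n ih =>
    rw [show (⊤ : Subgroup (FreeGroup α)).lowerCentralSeries (n+1) = ⁅(⊤ : Subgroup (FreeGroup α)).lowerCentralSeries n, (⊤ : Subgroup (FreeGroup α))⁆ from rfl]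
    rw [Subgroup.commutator_le]
    intro p hp q _
    have h1 : μ p ∈ D (α := α) n := ih hp
    have h2 : μ q ∈ D (α := α) 1 := mu_mem_D1 q
    have := commutator_mem_D h1 h2
    simpa [map_commutatorElement] using this

/-! ### The Magnus coefficient function and its leading-term analysis -/

def F : α × Bool → E α := fun p => cond p.2 (TL p.1) (SL p.1)

/-- The coefficients of the Magnus expansion of the word `w`. -/
def c (w : List (α × Bool)) : List α → ℤ := ((w.map F).prod : E α) δ

lemma c_nil : c ([] : List (α × Bool)) = δ (α := α) := by
  simp [c]

lemma c_cons (p : α × Bool) (w : List (α × Bool)) : c (p :: w) = F p (c w) := by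
  simp [c, List.prod_cons, Module.End.mul_apply]

lemma c_cons_true (x : α) (w : List (α × Bool)) : c ((x, true) :: w) = Tf x (c w) := by
  rw [c_cons]; rfl

lemma c_cons_false (x : α) (w : List (α × Bool)) : c ((x, false) :: w) = Sf x (c w) := by
  rw [c_cons]; rfl

/-- Parity sign of a word: `(-1)^(number of inverse letters)`. -/
def sg : List (α × Bool) → ℤ
  | [] => 1
  | (_, b) :: w => (cond b 1 (-1)) * sg w

lemma sg_nil : sg ([] : List (α × Bool)) = 1 := rfl
lemma sg_true (x : α) (w : List (α × Bool)) : sg ((x, true) :: w) = sg w := by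
  simp [sg]
lemma sg_false (x : α) (w : List (α × Bool)) : sg ((x, false) :: w) = -sg w := by
  simp [sg]

/-- Length of the initial run of letters equal to `x`. -/
def runx (x : α) : List (α × Bool) → ℕ
  | [] => 0
  | (y, _) :: w => if y = x then runx x w + 1 else 0

lemma runx_cons_self (x : α) (b : Bool) (w : List (α × Bool)) :
    runx x ((x, b) :: w) = runx x w + 1 := by simp [runx]

lemma drop_runx_head (x : α) :
    ∀ t : List (α × Bool), ((t.map Prod.fst).drop (runx x t)).head? ≠ some x := by
  intro t
  induction t with
  | nil => simp
  | cons p t ih =>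
    obtain ⟨y, b⟩ := p
    by_cases h : y = x
    · subst h
      simpa [runx_cons_self] using ih
    · simp [runx, h]

lemma drop_of_lt_runx (x : α) : ∀ (t : List (α × Bool)) (i : ℕ), i < runx x t →
    (t.map Prod.fst).drop i = x :: (t.map Prod.fst).drop (i + 1) := by
  intro t
  induction t with
  | nil => intro i h; simp [runx] at h
  | cons p t ih =>
    obtain ⟨y, b⟩ := p
    intro i h
    by_cases hyx : y = x
    · subst hyx
      rw [runx_cons_self] at h
      cases i with
      | zero => simp
      | succ i =>
        have := ih i (by omega)
        simpa using this
    · simp [runx, hyx] at h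

lemma head_of_runx_pos (x : α) {t : List (α × Bool)} (h : 0 < runx x t) :
    ∃ b, t.head? = some (x, b) := by
  cases t with
  | nil => simp [runx] at h
  | cons p t =>
    obtain ⟨y, b⟩ := p
    by_cases hyx : y = x
    · subst hyx; exact ⟨b, rfl⟩
    · simp [runx, hyx] at h

/-- No cancelling adjacent pair: adjacent letters with the same base have the same sign. -/
def Ok (w : List (α × Bool)) : Prop :=
  List.Chain' (fun p q : α × Bool => p.1 = q.1 → q.2 = p.2) w

lemma rep_shift (x : α) (n : ℕ) (l : List α) :
    List.replicate n x ++ x :: l = List.replicate (n + 1) x ++ l := by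
  rw [List.replicate_succ' (n := n) (a := x), List.append_assoc]
  rfl

lemma combo {e A B : ℤ} (hA : 0 ≤ e * A) (hB : 0 < -(e * B)) : 0 < e * (A - B) := by
  rw [mul_sub]; linarith

/-- The key leading-coefficient analysis of the Magnus expansion of a reduced word. -/
theorem key : ∀ w : List (α × Bool), Ok w →
    (0 < sg w * c w (w.map Prod.fst))
  ∧ (∀ x j, 0 < j → w.head? = some (x, false) →
      0 < (-1 : ℤ)^j * sg w * c w (List.replicate j x ++ w.map Prod.fst))
  ∧ (∀ v : List α, v ≠ [] →
      (∀ x, v = List.replicate v.length x → w.head? ≠ some (x, false)) →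
      c w (v ++ w.map Prod.fst) = 0)
  ∧ (∀ x i, 0 < i → i ≤ runx x w → w.head? = some (x, false) →
      0 < (-1 : ℤ)^i * sg w * c w ((w.map Prod.fst).drop i)) := by
  intro w
  induction w with
  | nil =>
    intro _
    refine ⟨by simp [c_nil, sg_nil, δ], by simp, ?_, ?_⟩
    · intro v hv _
      simp only [List.map_nil, List.append_nil, c_nil, δ]
      simp [hv]
    · intro x i hi hrun _
      simp [runx] at hrun
      omega
  | cons p t ih =>
    obtain ⟨x, b⟩ := p
    intro hw
    rw [Ok, List.Chain', List.isChain_cons] at hw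
    obtain ⟨hhd, hok⟩ := hw
    obtain ⟨ih1, ih2, ih3, ih4⟩ := ih hok
    cases b with
    | true =>
      have hne : t.head? ≠ some (x, false) := by
        intro h
        have := hhd (x, false) h rfl
        simp at this
      have hterm : ∀ v'' : List α, c t ((v'' ++ [x]) ++ t.map Prod.fst) = 0 := by
        intro v''
        apply ih3 (v'' ++ [x]) (by simp)
        intro y hy
        have hxy : x = y := List.eq_of_mem_replicate (hy ▸ (by simp : x ∈ v'' ++ [x]))
        subst hxy
        exact hne
      have hS3 : ∀ v : List α, v ≠ [] →
          (∀ y, v = List.replicate v.length y → ((x, true) :: t).head? ≠ some (y, false)) →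
          c ((x, true) :: t) (v ++ ((x, true) :: t).map Prod.fst) = 0 := by
        intro v hv _
        obtain ⟨z, v', rfl⟩ := List.exists_cons_of_ne_nil hv
        rw [List.map_cons, c_cons_true, List.cons_append, Tf_cons]
        have hw1 : z :: (v' ++ x :: t.map Prod.fst) = ((z :: v') ++ [x]) ++ t.map Prod.fst := by
          simp
        have hw2 : v' ++ x :: t.map Prod.fst = (v' ++ [x]) ++ t.map Prod.fst := by simp
        rw [hw1, hterm (z :: v'), zero_add]
        split
        · rw [hw2, hterm v']
        · rfl
      refine ⟨?_, ?_, hS3, ?_⟩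
      · -- S1
        rw [List.map_cons, c_cons_true, sg_true, Tf_cons, if_pos rfl]
        have h1 : c t (x :: t.map Prod.fst) = 0 := by
          have := hterm []
          simpa using this
        rw [h1, zero_add]
        exact ih1
      · intro y j hj hhead
        simp at hhead
      · intro y i hi hrun hhead
        simp at hhead
    | false =>
      have hhdf : ∀ b', t.head? = some (x, b') → b' = false := by
        intro b' h
        exact hhd (x, b') h rfl
      have headt : 0 < runx x t → t.head? = some (x, false) := by
        intro hr
        obtain ⟨b', hb'⟩ := head_of_runx_pos x hr
        have := hhdf b' hb'
        subst this
        exact hb'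
      -- S4'
      have hS4' : ∀ d i', i' + d = runx x t →
          0 < (-1 : ℤ)^(i'+1) * sg ((x, false) :: t) *
            c ((x, false) :: t) ((x :: t.map Prod.fst).drop (i'+1)) := by
        intro d
        induction d with
        | zero =>
          intro i' hi'
          rw [Nat.add_zero] at hi'
          subst hi'
          rw [List.drop_succ_cons]
          have hc : c ((x, false) :: t) ((t.map Prod.fst).drop (runx x t)) =
              c t ((t.map Prod.fst).drop (runx x t)) := by
            rw [c_cons_false]
            exact Sf_head_ne x _ (drop_runx_head x t)
          rw [hc, sg_false]
          rcases Nat.eq_zero_or_pos (runx x t) with h0 | hpos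
          · rw [h0]
            simp only [List.drop_zero, zero_add, pow_one]
            nlinarith [ih1]
          · have h4 := ih4 x (runx x t) hpos le_rfl (headt hpos)
            have hpow : ((-1 : ℤ))^(runx x t + 1) * -sg t = (-1)^(runx x t) * sg t := by
              rw [pow_succ]; ring
            rw [hpow]
            exact h4
        | succ d ihd =>
          intro i' hi'
          have hlt : i' < runx x t := by omega
          rw [List.drop_succ_cons, drop_of_lt_runx x t i' hlt, c_cons_false, Sf_cons, if_pos rfl]
          -- goal: 0 < (-1)^(i'+1) * sg w * (c t (x :: drop (i'+1) ut) - Sf x (c t) (drop (i'+1) ut))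
          apply combo
          · -- 0 ≤ e * c t (x :: drop (i'+1) ut); note x :: drop (i'+1) ut = drop i' ut
            rw [← drop_of_lt_runx x t i' hlt]
            rcases Nat.eq_zero_or_pos i' with h0 | hpos
            · subst h0
              simp only [List.drop_zero, zero_add, pow_one, sg_false]
              nlinarith [ih1]
            · have h4 := ih4 x i' hpos (by omega) (headt (by omega))
              have hpow : ((-1 : ℤ))^(i' + 1) * sg ((x, false) :: t) = (-1)^(i') * sg t := by
                rw [sg_false, pow_succ]; ring
              rw [hpow]
              exact le_of_lt h4
          · have hB := ihd (i'+1) (by omega)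
            rw [List.drop_succ_cons, c_cons_false] at hB
            have hpow : -((-1 : ℤ)^(i'+1) * sg ((x, false) :: t) *
                Sf x (c t) ((t.map Prod.fst).drop (i'+1))) =
                (-1 : ℤ)^(i'+1+1) * sg ((x, false) :: t) *
                Sf x (c t) ((t.map Prod.fst).drop (i'+1)) := by
              rw [pow_succ (-1 : ℤ) (i'+1)]; ring
            rw [hpow]
            exact hB
      -- S1
      have hS1 : 0 < sg ((x, false) :: t) *
          c ((x, false) :: t) (((x, false) :: t).map Prod.fst) := by
        rw [List.map_cons, c_cons_false, Sf_cons, if_pos rfl]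
        have hsg : sg ((x, false) :: t) = 1 * sg ((x, false) :: t) := by ring
        rw [hsg]
        apply combo
        · -- 0 ≤ sg w * c t (x :: ut)
          by_cases hh : t.head? = some (x, false)
          · have h2 := ih2 x 1 one_pos hh
            simp only [pow_one, List.replicate_one, List.singleton_append] at h2
            rw [sg_false]
            nlinarith [h2]
          · have h1 : c t ([x] ++ t.map Prod.fst) = 0 := by
              apply ih3 [x] (by simp)
              intro y hy
              have hxy : x = y := by simpa using hy
              subst hxy
              exact hh
            simp only [List.singleton_append] at h1
            rw [h1, mul_zero]
        · have hB := hS4' (runx x t) 0 (by omega)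
          simp only [zero_add, pow_one, List.drop_succ_cons, List.drop_zero, c_cons_false] at hB
          have : -(1 * sg ((x, false) :: t) * Sf x (c t) (t.map Prod.fst)) =
              (-1 : ℤ) * sg ((x, false) :: t) * Sf x (c t) (t.map Prod.fst) := by ring
          rw [this]
          exact hB
      -- S2 (generalised)
      have hG : ∀ j, 0 < (-1 : ℤ)^j * sg ((x, false) :: t) *
          c ((x, false) :: t) (List.replicate j x ++ ((x, false) :: t).map Prod.fst) := by
        intro j
        induction j with
        | zero => simpa using hS1
        | succ j ihj =>
          rw [List.map_cons, List.replicate_succ, List.cons_append, c_cons_false, Sf_cons,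
            if_pos rfl]
          apply combo
          · -- term1: c t (x :: (replicate j x ++ x :: ut)) with x :: replicate j x ++ x::ut
            -- = replicate (j+2) x ++ ut
            have hword : x :: (List.replicate j x ++ (x :: t.map Prod.fst)) =
                List.replicate (j+2) x ++ t.map Prod.fst := by
              rw [← List.cons_append, ← List.replicate_succ, rep_shift]
            rw [hword]
            have hco : (-1 : ℤ)^(j+1) * sg ((x, false) :: t) = (-1)^(j+2) * sg t := by
              rw [sg_false, pow_succ, pow_succ, pow_succ]; ring
            rw [hco]
            by_cases hh : t.head? = some (x, false)
            · exact le_of_lt (ih2 x (j+2) (by omega) hh)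
            · rw [ih3 (List.replicate (j+2) x) (by simp) ?_, mul_zero]
              intro y hy
              have hxy : x = y := List.eq_of_mem_replicate
                (hy ▸ (List.mem_replicate.mpr ⟨by omega, rfl⟩))
              subst hxy
              exact hh
          · have hB := ihj
            rw [List.map_cons, c_cons_false] at hB
            have hco : -((-1 : ℤ)^(j+1) * sg ((x, false) :: t) *
                Sf x (c t) (List.replicate j x ++ x :: t.map Prod.fst)) =
                (-1 : ℤ)^j * sg ((x, false) :: t) *
                Sf x (c t) (List.replicate j x ++ x :: t.map Prod.fst) := by
              rw [pow_succ]; ring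
            rw [hco]
            exact hB
      -- S3
      have hS3 : ∀ v : List α, v ≠ [] →
          (∀ y, v = List.replicate v.length y → ((x, false) :: t).head? ≠ some (y, false)) →
          c ((x, false) :: t) (v ++ ((x, false) :: t).map Prod.fst) = 0 := by
        intro v
        induction v with
        | nil => intro h; exact absurd rfl h
        | cons z v' ihv =>
          intro _ hcond
          have hvnotx : ¬(z :: v' = List.replicate (z :: v').length x) := fun h =>
            hcond x h (by rw [List.head?_cons])
          have hterm1 : c t ((z :: v' ++ [x]) ++ t.map Prod.fst) = 0 := by
            apply ih3 _ (by simp)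
            intro y hy
            have hxy : x = y := List.eq_of_mem_replicate (hy ▸ (by simp : x ∈ z :: v' ++ [x]))
            subst hxy
            intro _
            apply hvnotx
            have hlen : (z :: v').length + 1 = (z :: v' ++ [x]).length := by simp
            refine List.eq_replicate_iff.mpr ⟨rfl, ?_⟩
            intro a ha
            exact List.eq_of_mem_replicate (hy ▸ (by simp at ha ⊢; tauto : a ∈ z :: v' ++ [x]))
          rw [List.map_cons, c_cons_false, List.cons_append, Sf_cons]
          have hshape : z :: (v' ++ x :: t.map Prod.fst) =
              (z :: v' ++ [x]) ++ t.map Prod.fst := by simp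
          rw [hshape, hterm1]
          by_cases hzx : z = x
          · rw [if_pos hzx]
            rcases eq_or_ne v' [] with h0 | hne'
            · subst h0
              exact absurd (by simp [hzx]) hvnotx
            · have hz : c ((x, false) :: t) (v' ++ ((x, false) :: t).map Prod.fst) = 0 := by
                apply ihv hne'
                intro y hy hhw
                have hxy : x = y := by
                  simp only [List.head?_cons, Option.some_inj, Prod.mk.injEq, and_true] at hhw
                  exact hhw
                subst hxy
                apply hvnotx
                rw [hzx]
                conv_lhs => rw [hy]
                simp [List.replicate_succ]
              rw [List.map_cons, c_cons_false] at hz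
              rw [hz, sub_zero]
          · rw [if_neg hzx, sub_zero]
      refine ⟨hS1, ?_, hS3, ?_⟩
      · intro y j hj hhead
        simp only [List.head?_cons, Option.some_inj, Prod.mk.injEq, and_true] at hhead
        subst hhead
        exact hG j
      · intro y i hi hrun hhead
        simp only [List.head?_cons, Option.some_inj, Prod.mk.injEq, and_true] at hhead
        subst hhead
        rw [runx_cons_self] at hrun
        cases i with
        | zero => omega
        | succ i' => exact hS4' (runx x t - i') i' (by omega)

lemma ok_of_reduce : ∀ w : List (α × Bool), FreeGroup.reduce w = w → Ok w := by
  intro w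
  induction w with
  | nil => intro _; exact List.isChain_nil
  | cons p t ih =>
    intro h
    have hred : FreeGroup.Red (FreeGroup.reduce (p :: t)) (p :: FreeGroup.reduce t) := by
      rw [h]; exact FreeGroup.Red.cons_cons FreeGroup.reduce.red
    have h2 : FreeGroup.reduce (p :: t) = p :: FreeGroup.reduce t := FreeGroup.reduce.min hred
    have ht : FreeGroup.reduce t = t := by
      have h3 := h2.symm.trans h
      injection h3
    rw [Ok, List.Chain', List.isChain_cons]
    refine ⟨?_, ih ht⟩
    intro q hq hfst
    cases t with
    | nil => simp at hq
    | cons q0 t2 =>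
      have hq0 : q0 = q := by simpa using hq
      subst hq0
      by_contra hne2
      have hcond : p.1 = q0.1 ∧ p.2 = !q0.2 := by
        refine ⟨hfst, ?_⟩
        cases hp : p.2 <;> cases hq2 : q0.2 <;> simp [hp, hq2] at hne2 ⊢ <;> simp [hp, hq2] at hne2 ⊢
      have hsh : FreeGroup.reduce (p :: q0 :: t2) = t2 := by
        rw [FreeGroup.reduce.cons, ht]
        simp [hcond]
      rw [h] at hsh
      have hlen := congrArg List.length hsh
      simp at hlen
      omega

lemma ok_toWord (g : FreeGroup α) : Ok g.toWord :=
  ok_of_reduce _ (FreeGroup.reduce_toWord g)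

lemma mu_val (g : FreeGroup α) : ((μ g : (E α)ˣ) : E α) = (g.toWord.map F).prod := by
  conv_lhs => rw [← FreeGroup.mk_toWord (x := g)]
  show (Units.coeHom (E α)) (FreeGroup.lift uX (FreeGroup.mk g.toWord)) = _
  rw [FreeGroup.lift_mk, map_list_prod, List.map_map]
  have hfun : (⇑(Units.coeHom (E α)) ∘ fun x : α × Bool => bif x.2 then uX x.1 else (uX x.1)⁻¹) = F := by
    funext p
    obtain ⟨y, b⟩ := p
    cases b <;> rfl
  rw [hfun]

lemma mu_apply_word (g : FreeGroup α) : ((μ g : (E α)ˣ) : E α) δ = c g.toWord := by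
  rw [mu_val]; rfl

end Stmt9Aux

/-- Every free group is residually nilpotent. -/
theorem stmt9 (α : Type*) :
    (⨅ n : ℕ, (⊤ : Subgroup (FreeGroup α)).lowerCentralSeries n) = ⊥ := by
  classical
  rw [eq_bot_iff]
  intro g hg
  rw [Subgroup.mem_iInf] at hg
  rw [Subgroup.mem_bot]
  by_contra hne
  have hwne : g.toWord ≠ [] := fun h => hne (FreeGroup.toWord_eq_nil_iff.mp h)
  have hK := (Stmt9Aux.key g.toWord (Stmt9Aux.ok_toWord g)).1
  have hD : Stmt9Aux.μ g ∈ Stmt9Aux.D (α := α) (g.toWord.length + 1) :=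
    Stmt9Aux.lcs_le _ (hg _)
  have hdeg := (Stmt9Aux.mem_D.mp hD).2.2
  have hzero := hdeg 0 Stmt9Aux.δ (fun W hW => absurd hW (by omega))
    (g.toWord.map Prod.fst) (by simp)
  rw [LinearMap.sub_apply] at hzero
  rw [Pi.sub_apply] at hzero
  rw [Module.End.one_apply] at hzero
  rw [Stmt9Aux.mu_apply_word] at hzero
  have hδ : Stmt9Aux.δ (g.toWord.map Prod.fst) = 0 := by
    simp [Stmt9Aux.δ, hwne]
  rw [hδ, sub_zero] at hzero
  rw [hzero, mul_zero] at hK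
  exact lt_irrefl 0 hK
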